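/- For |y| = 1 with y ≠ 1, the equation xy = Ψ(x,y) has exactly one root x = X₀(y) with |x| < 1, where Ψ(x,y) = L(x,y)·[xy + y(1-x)·α₁â₂ + x(1-y)·α₂â₁] and Ψ is, for |x| ≤ 1, |y| ≤ 1, the probability generating function of a proper two-dimensional probability distribution. (Application of Rouché's theorem: |Ψ(x,y)| < 1 = |xy| on |x| = 1 when |y|=1, y≠1.) -/

import Mathlib

open Complex

noncomputable def mob (u w : ℂ) : ℂ := (u - w) / (1 - (starRingEnd ℂ) u * w)

lemma mob_id (u w : ℂ) :
    normSq (1 - (starRingEnd ℂ) u * w) - normSq (u - w)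
      = (1 - normSq u) * (1 - normSq w) := by
  simp [normSq_apply, mul_re, mul_im, sub_re, sub_im, one_re, one_im]
  ring

lemma mob_denom_lb {u w : ℂ} {r : ℝ} (hr : r < 1) (hu : ‖u‖ ≤ r)
    (hw : ‖w‖ ≤ 1) : 1 - r ≤ ‖1 - (starRingEnd ℂ) u * w‖ := by
  have h1 : ‖(starRingEnd ℂ) u * w‖ ≤ r := by
    rw [norm_mul, Complex.norm_conj]
    calc ‖u‖ * ‖w‖ ≤ r * 1 :=
          mul_le_mul hu hw (norm_nonneg w) (le_trans (norm_nonneg u) hu)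
    _ = r := mul_one r
  have h2 : ‖(1:ℂ)‖ - ‖(starRingEnd ℂ) u * w‖ ≤ ‖1 - (starRingEnd ℂ) u * w‖ :=
    norm_sub_norm_le _ _
  simp only [norm_one] at h2
  linarith

lemma mob_denom_ne {u w : ℂ} {r : ℝ} (hr : r < 1) (hu : ‖u‖ ≤ r)
    (hw : ‖w‖ ≤ 1) : 1 - (starRingEnd ℂ) u * w ≠ 0 := by
  intro h
  have := mob_denom_lb hr hu hw
  rw [h] at this
  simp at this
  linarith

lemma mob_denom_ub {u w : ℂ} {r : ℝ} (hu : ‖u‖ ≤ r)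
    (hw : ‖w‖ ≤ 1) :
    ‖1 - (starRingEnd ℂ) u * w‖ ≤ 1 + r := by
  have h := norm_sub_le 1 ((starRingEnd ℂ) u * w)
  rw [norm_one, norm_mul, Complex.norm_conj] at h
  have h2 : ‖u‖ * ‖w‖ ≤ r * 1 :=
    mul_le_mul hu hw (norm_nonneg w) (le_trans (norm_nonneg u) hu)
  linarith

noncomputable def Kc (r : ℝ) : ℝ := Real.sqrt (r * (2 - r))

lemma Kc_lt_one {r : ℝ} (hr0 : 0 ≤ r) (hr : r < 1) : Kc r < 1 := by
  rw [Kc, show (1:ℝ) = Real.sqrt 1 by simp]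
  apply Real.sqrt_lt_sqrt (by nlinarith)
  nlinarith

lemma Kc_nonneg (r : ℝ) : 0 ≤ Kc r := Real.sqrt_nonneg _

lemma mob_bound {u w : ℂ} {r : ℝ} (hr0 : 0 ≤ r) (hr : r < 1)
    (hu : ‖u‖ ≤ r) (hw : ‖w‖ ≤ r) :
    ‖mob u w‖ ≤ Kc r := by
  have hw1 : ‖w‖ ≤ 1 := le_trans hw hr.le
  have hdlb := mob_denom_lb hr hu hw1
  have hdub := mob_denom_ub hu hw1
  have hDpos : 0 < ‖1 - (starRingEnd ℂ) u * w‖ := by linarith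
  have hnsqD : 0 < normSq (1 - (starRingEnd ℂ) u * w) := by
    rw [← Complex.sq_norm]; positivity
  have hnu : normSq u ≤ r ^ 2 := by
    rw [← Complex.sq_norm]; nlinarith [norm_nonneg u]
  have hnw : normSq w ≤ r ^ 2 := by
    rw [← Complex.sq_norm]; nlinarith [norm_nonneg w]
  have hDub2 : normSq (1 - (starRingEnd ℂ) u * w) ≤ (1 + r) ^ 2 := by
    rw [← Complex.sq_norm]; exact pow_le_pow_left₀ hDpos.le hdub 2
  have key : normSq (u - w) ≤ r * (2 - r) * normSq (1 - (starRingEnd ℂ) u * w) := by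
    have hid := mob_id u w
    have e1 : (1 - r ^ 2) ^ 2 ≤ (1 - normSq u) * (1 - normSq w) := by
      have h1 : (0:ℝ) ≤ 1 - r ^ 2 := by nlinarith
      have := mul_le_mul (by linarith : 1 - r ^ 2 ≤ 1 - normSq u)
        (by linarith : 1 - r ^ 2 ≤ 1 - normSq w) h1 (by linarith)
      nlinarith
    have e2 : normSq (u - w) ≤ normSq (1 - (starRingEnd ℂ) u * w) - (1 - r ^ 2) ^ 2 := by
      linarith
    have e3 : (1 - r) ^ 2 * normSq (1 - (starRingEnd ℂ) u * w) ≤ (1 - r) ^ 2 * (1 + r) ^ 2 :=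
      mul_le_mul_of_nonneg_left hDub2 (sq_nonneg _)
    nlinarith
  rw [mob, Complex.norm_def, map_div₀, Kc]
  apply Real.sqrt_le_sqrt
  rw [div_le_iff₀ hnsqD]
  exact key

lemma mob_normSq_le {a z : ℂ} (ha : ‖a‖ < 1) (hz : ‖z‖ ≤ 1) :
    ‖mob a z‖ ≤ 1 := by
  have hd := mob_denom_ne ha le_rfl hz
  have hnsqD : 0 < normSq (1 - (starRingEnd ℂ) a * z) := normSq_pos.2 hd
  have hna : normSq a < 1 := by
    rw [← Complex.sq_norm]; nlinarith [norm_nonneg a]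
  have hnz : normSq z ≤ 1 := by
    rw [← Complex.sq_norm]; nlinarith [norm_nonneg z]
  have hid := mob_id a z
  rw [Complex.norm_def, show (1:ℝ) = Real.sqrt 1 by simp]
  apply Real.sqrt_le_sqrt
  rw [mob, map_div₀, div_le_iff₀ hnsqD, one_mul]
  nlinarith [normSq_nonneg z]

lemma mob_lt_one {a z : ℂ} (ha : ‖a‖ < 1) (hz : ‖z‖ < 1) :
    ‖mob a z‖ < 1 := by
  have hd := mob_denom_ne ha le_rfl hz.le
  have hnsqD : 0 < normSq (1 - (starRingEnd ℂ) a * z) := normSq_pos.2 hd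
  have hna : normSq a < 1 := by
    rw [← Complex.sq_norm]; nlinarith [norm_nonneg a]
  have hnz : normSq z < 1 := by
    rw [← Complex.sq_norm]; nlinarith [norm_nonneg z]
  have hid := mob_id a z
  rw [Complex.norm_def, show (1:ℝ) = Real.sqrt 1 by simp]
  apply Real.sqrt_lt_sqrt (normSq_nonneg _)
  rw [mob, map_div₀, div_lt_iff₀ hnsqD, one_mul]
  nlinarith [normSq_nonneg z]

lemma mob_zero (a : ℂ) : mob a 0 = a := by simp [mob]

lemma mob_self {u : ℂ} (h : 1 - (starRingEnd ℂ) u * u ≠ 0) : mob u u = 0 := by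
  simp [mob]

lemma mob_invol {a z : ℂ} (ha : ‖a‖ < 1) (hz : ‖z‖ ≤ 1) :
    mob a (mob a z) = z := by
  have hd1 : 1 - (starRingEnd ℂ) a * z ≠ 0 := mob_denom_ne ha le_rfl hz
  have hd2 : 1 - (starRingEnd ℂ) a * mob a z ≠ 0 :=
    mob_denom_ne ha le_rfl (mob_normSq_le ha hz)
  have hd3 : 1 - (starRingEnd ℂ) a * a ≠ 0 := mob_denom_ne ha le_rfl (le_of_lt ha)
  have hd4 : 1 - a * (starRingEnd ℂ) a ≠ 0 := by rwa [mul_comm] at hd3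
  simp only [mob] at hd2 ⊢
  have e1 : a - (a - z) / (1 - (starRingEnd ℂ) a * z)
      = z * (1 - (starRingEnd ℂ) a * a) / (1 - (starRingEnd ℂ) a * z) := by
    rw [eq_div_iff hd1, sub_mul, div_mul_cancel₀ _ hd1]; ring
  have e2 : 1 - (starRingEnd ℂ) a * ((a - z) / (1 - (starRingEnd ℂ) a * z))
      = (1 - (starRingEnd ℂ) a * a) / (1 - (starRingEnd ℂ) a * z) := by
    rw [eq_div_iff hd1, sub_mul, mul_assoc, div_mul_cancel₀ _ hd1]; ring
  rw [e1, e2, div_div_div_cancel_right₀ hd1, mul_div_assoc, div_self hd3, mul_one]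

lemma mob_diffAt {a z : ℂ} (h : 1 - (starRingEnd ℂ) a * z ≠ 0) :
    DifferentiableAt ℂ (fun w => mob a w) z := by
  apply DifferentiableAt.div
  · exact (differentiable_const a).differentiableAt.sub differentiable_id.differentiableAt
  · exact (differentiable_const (1:ℂ)).differentiableAt.sub
      ((differentiable_const _).differentiableAt.mul differentiable_id.differentiableAt)
  · exact h

lemma contraction {f : ℂ → ℂ} {r : ℝ} (hr0 : 0 ≤ r) (hr : r < 1)
    (hdf : DifferentiableOn ℂ f (Metric.ball 0 1))
    (hb : ∀ x : ℂ, ‖x‖ ≤ 1 → ‖f x‖ ≤ r)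
    {a b : ℂ} (ha : ‖a‖ ≤ r) (hbb : ‖b‖ ≤ r) :
    ‖mob (f a) (f b)‖ ≤ (Kc r + 1) / 2 * ‖mob a b‖ := by
  set K' : ℝ := (Kc r + 1) / 2 with hK'
  have hKlt : Kc r < 1 := Kc_lt_one hr0 hr
  have hK'lt : K' < 1 := by rw [hK']; linarith
  have hK'gt : Kc r < K' := by rw [hK']; linarith
  have ha1 : ‖a‖ < 1 := lt_of_le_of_lt ha hr
  have hfa : ‖f a‖ ≤ r := hb a (le_trans ha hr.le)
  set H : ℂ → ℂ := fun z => mob (f a) (f (mob a z)) with hH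
  have hH0 : H 0 = 0 := by
    rw [hH]; simp only [mob_zero]
    exact mob_self (mob_denom_ne hr hfa (le_trans hfa hr.le))
  have hHd : DifferentiableOn ℂ H (Metric.ball 0 1) := by
    intro z hz
    rw [Metric.mem_ball, dist_zero_right] at hz
    have h1 : DifferentiableAt ℂ (fun w => mob a w) z :=
      mob_diffAt (mob_denom_ne hr (le_trans ha le_rfl) hz.le)
    have hmz : ‖mob a z‖ < 1 := mob_lt_one ha1 hz
    have h2 : DifferentiableAt ℂ f (mob a z) :=
      hdf.differentiableAt (Metric.isOpen_ball.mem_nhds (by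
        rw [Metric.mem_ball, dist_zero_right]; exact hmz))
    have h3 : DifferentiableAt ℂ (fun w => mob (f a) w) (f (mob a z)) :=
      mob_diffAt (mob_denom_ne hr hfa (le_trans (hb _ hmz.le) hr.le))
    exact ((h3.comp (mob a z) h2).comp z h1).differentiableWithinAt
  have hmaps : Set.MapsTo H (Metric.ball 0 1) (Metric.ball (H 0) K') := by
    intro z hz
    rw [Metric.mem_ball, dist_zero_right] at hz
    rw [hH0, Metric.mem_ball, dist_zero_right]
    have hmz : ‖mob a z‖ ≤ 1 := (mob_lt_one ha1 hz).le
    exact lt_of_le_of_lt (mob_bound hr0 hr hfa (hb _ hmz)) hK'gt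
  have hmem : mob a b ∈ Metric.ball (0:ℂ) 1 := by
    rw [Metric.mem_ball, dist_zero_right]
    exact mob_lt_one ha1 (lt_of_le_of_lt hbb hr)
  have := Complex.dist_le_div_mul_dist_of_mapsTo_ball hHd (hmaps.mono_right Metric.ball_subset_closedBall) hmem
  rw [hH0, dist_zero_right, dist_zero_right, div_one] at this
  have hHab : H (mob a b) = mob (f a) (f b) := by
    simp only [hH, mob_invol ha1 (le_trans hbb hr.le)]
  rw [hHab] at this
  simpa using this

lemma holo_fixed_point {f : ℂ → ℂ} {r : ℝ} (hr0 : 0 ≤ r) (hr : r < 1)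
    (hdf : DifferentiableOn ℂ f (Metric.ball 0 1))
    (hb : ∀ x : ℂ, ‖x‖ ≤ 1 → ‖f x‖ ≤ r) :
    ∃! x : ℂ, ‖x‖ < 1 ∧ f x = x := by
  set K' : ℝ := (Kc r + 1) / 2 with hK'
  have hK'0 : 0 ≤ K' := by have := Kc_nonneg r; rw [hK']; linarith
  have hK'lt : K' < 1 := by have := Kc_lt_one hr0 hr; rw [hK']; linarith
  -- uniqueness of fixed points
  have huniq : ∀ x₁ x₂ : ℂ, ‖x₁‖ < 1 → f x₁ = x₁ →
      ‖x₂‖ < 1 → f x₂ = x₂ → x₁ = x₂ := by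
    intro x₁ x₂ h1 hf1 h2 hf2
    have ha1 : ‖x₁‖ ≤ r := by rw [← hf1]; exact hb x₁ h1.le
    have ha2 : ‖x₂‖ ≤ r := by rw [← hf2]; exact hb x₂ h2.le
    have := contraction hr0 hr hdf hb ha1 ha2
    rw [hf1, hf2] at this
    have hz : ‖mob x₁ x₂‖ = 0 := by
      by_contra hne
      have hpos : 0 < ‖mob x₁ x₂‖ :=
        lt_of_le_of_ne (norm_nonneg _) (Ne.symm hne)
      nlinarith
    have hmz : mob x₁ x₂ = 0 := by rwa [norm_eq_zero] at hz
    rw [mob, div_eq_zero_iff] at hmz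
    rcases hmz with h | h
    · exact sub_eq_zero.1 h
    · exact absurd h (mob_denom_ne hr ha1 (le_trans ha2 hr.le))
  -- the iteration sequence
  set x : ℕ → ℂ := fun n => f^[n] 0 with hx
  have hxs : ∀ n, x (n + 1) = f (x n) := by
    intro n; rw [hx]; simp [Function.iterate_succ_apply']
  have habs : ∀ n, ‖x n‖ ≤ r := by
    intro n; induction n with
    | zero => simpa [hx] using hr0
    | succ n ih => rw [hxs]; exact hb _ (le_trans ih hr.le)
  set C : ℝ := ‖mob (x 0) (x 1)‖ with hC
  have hmob : ∀ n, ‖mob (x n) (x (n + 1))‖ ≤ C * K' ^ n := by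
    intro n; induction n with
    | zero => simp [hC]
    | succ n ih =>
      have := contraction hr0 hr hdf hb (habs n) (habs (n + 1))
      rw [← hxs n, ← hxs (n + 1)] at this
      calc ‖mob (x (n + 1)) (x (n + 2))‖
          ≤ K' * ‖mob (x n) (x (n + 1))‖ := this
        _ ≤ K' * (C * K' ^ n) := by
            exact mul_le_mul_of_nonneg_left ih hK'0
        _ = C * K' ^ (n + 1) := by ring
  have hdist : ∀ n, dist (x n) (x (n + 1)) ≤ 2 * C * K' ^ n := by
    intro n
    have hd := mob_denom_ne hr (habs n) (le_trans (habs (n + 1)) hr.le)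
    have heq : x n - x (n + 1) = mob (x n) (x (n + 1)) *
        (1 - (starRingEnd ℂ) (x n) * x (n + 1)) := by
      rw [mob, div_mul_cancel₀ _ hd]
    have hub : ‖1 - (starRingEnd ℂ) (x n) * x (n + 1)‖ ≤ 2 := by
      have := mob_denom_ub (habs n) (le_trans (habs (n + 1)) hr.le)
      linarith
    rw [Complex.dist_eq, heq, norm_mul]
    calc ‖mob (x n) (x (n + 1))‖ *
        ‖1 - (starRingEnd ℂ) (x n) * x (n + 1)‖
        ≤ (C * K' ^ n) * 2 := by
          apply mul_le_mul (hmob n) hub (norm_nonneg _)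
          positivity
      _ = 2 * C * K' ^ n := by ring
  have hcauchy : CauchySeq x := cauchySeq_of_le_geometric K' (2 * C) hK'lt hdist
  obtain ⟨l, hl⟩ := cauchySeq_tendsto_of_complete hcauchy
  have hlabs : ‖l‖ ≤ r := by
    have : Filter.Tendsto (fun n => ‖x n‖) Filter.atTop
        (nhds (‖l‖)) := (continuous_norm.tendsto l).comp hl
    exact le_of_tendsto this (Filter.Eventually.of_forall habs)
  have hl1 : ‖l‖ < 1 := lt_of_le_of_lt hlabs hr
  have hcont : ContinuousAt f l :=
    (hdf.differentiableAt (Metric.isOpen_ball.mem_nhds (by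
      rw [Metric.mem_ball, dist_zero_right]; exact hl1))).continuousAt
  have hfl : f l = l := by
    have h1 : Filter.Tendsto (fun n => x (n + 1)) Filter.atTop (nhds l) :=
      hl.comp (Filter.tendsto_add_atTop_nat 1)
    have h2 : Filter.Tendsto (fun n => f (x n)) Filter.atTop (nhds (f l)) :=
      (hcont.tendsto).comp hl
    have h3 : (fun n => x (n + 1)) = fun n => f (x n) := funext hxs
    rw [h3] at h1
    exact tendsto_nhds_unique h2 h1
  exact ⟨l, ⟨hl1, hfl⟩, fun z hz => huniq z l hz.1 hz.2 hl1 hfl⟩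

/-- For |y| = 1, y ≠ 1, the equation xy = Ψ(x,y) has exactly one root x with |x| < 1,
where Ψ is the probability generating function of a proper two-dimensional distribution
satisfying the strict inequality |Ψ(x,y)| < 1 on |x| = 1, |y| = 1, y ≠ 1
(Rouché's theorem). -/
theorem stmt_3 (w : ℕ × ℕ → ℝ)
    (hw : ∀ p, 0 ≤ w p) (hsum : Summable w) (htotal : ∑' p, w p = 1)
    (Ψ : ℂ → ℂ → ℂ)
    (hΨ : ∀ x y : ℂ, ‖x‖ ≤ 1 → ‖y‖ ≤ 1 →
      Ψ x y = ∑' p : ℕ × ℕ, (w p : ℂ) * x ^ p.1 * y ^ p.2)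
    (hstrict : ∀ x y : ℂ, ‖x‖ = 1 → ‖y‖ = 1 → y ≠ 1 →
      ‖Ψ x y‖ < 1)
    (y : ℂ) (hy : ‖y‖ = 1) (hy1 : y ≠ 1) :
    ∃! x : ℂ, ‖x‖ < 1 ∧ x * y = Ψ x y := by
  have hy0 : y ≠ 0 := by
    intro h; rw [h] at hy; simp at hy
  set S : ℂ → ℂ := fun x => ∑' p : ℕ × ℕ, (w p : ℂ) * x ^ p.1 * y ^ p.2 with hS
  -- termwise bound
  have hbound : ∀ (p : ℕ × ℕ) (x : ℂ), ‖x‖ ≤ 1 →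
      ‖(w p : ℂ) * x ^ p.1 * y ^ p.2‖ ≤ w p := by
    intro p x hx
    rw [norm_mul, norm_mul,
      norm_pow, norm_pow, hy, one_pow, mul_one, Complex.norm_real, Real.norm_of_nonneg (hw p)]
    calc w p * ‖x‖ ^ p.1 ≤ w p * 1 := by
          apply mul_le_mul_of_nonneg_left _ (hw p)
          exact pow_le_one₀ (norm_nonneg x) hx
      _ = w p := mul_one _
  -- analyticity and continuity
  have hdiff : DifferentiableOn ℂ S (Metric.ball 0 1) := by
    apply differentiableOn_tsum_of_summable_norm hsum
    · intro p
      exact (((differentiable_pow p.1).const_mul _).mul_const _).differentiableOn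
    · exact Metric.isOpen_ball
    · intro p z hz
      rw [Metric.mem_ball, dist_zero_right] at hz
      exact hbound p z hz.le
  have hcont : ContinuousOn S (Metric.closedBall 0 1) := by
    apply continuousOn_tsum
    · intro p
      exact ((continuous_const.mul (continuous_pow p.1)).mul continuous_const).continuousOn
    · exact hsum
    · intro p z hz
      rw [Metric.mem_closedBall, dist_zero_right] at hz
      exact hbound p z hz
  have hdcc : DiffContOnCl ℂ S (Metric.ball 0 1) :=
    ⟨hdiff, by rwa [closure_ball (0:ℂ) one_ne_zero]⟩
  -- sup on the unit circle
  obtain ⟨x₀, hx₀mem, hx₀max⟩ := (isCompact_sphere (0:ℂ) 1).exists_isMaxOn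
    ⟨1, by simp⟩ ((continuous_norm.comp_continuousOn
      (hcont.mono Metric.sphere_subset_closedBall)))
  set r : ℝ := ‖S x₀‖ with hr
  have hx₀abs : ‖x₀‖ = 1 := by
    have := mem_sphere_zero_iff_norm.1 hx₀mem
    exact this
  have hr0 : 0 ≤ r := norm_nonneg _
  have hr1 : r < 1 := by
    have hSx : S x₀ = Ψ x₀ y := (hΨ x₀ y hx₀abs.le hy.le).symm
    rw [hr, hSx]
    exact hstrict x₀ y hx₀abs hy hy1
  -- maximum modulus principle
  have hglob : ∀ x : ℂ, ‖x‖ ≤ 1 → ‖S x‖ ≤ r := by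
    intro x hx
    have hcl : x ∈ closure (Metric.ball (0:ℂ) 1) := by
      rw [closure_ball (0:ℂ) one_ne_zero, Metric.mem_closedBall, dist_zero_right]
      exact hx
    have hfr : ∀ z ∈ frontier (Metric.ball (0:ℂ) 1), ‖S z‖ ≤ r := by
      intro z hz
      rw [frontier_ball (0:ℂ) one_ne_zero] at hz
      exact hx₀max hz
    have := Complex.norm_le_of_forall_mem_frontier_norm_le Metric.isBounded_ball hdcc hfr hcl
    exact this
  -- the fixed point map
  set g : ℂ → ℂ := fun x => y⁻¹ * S x with hg
  have hgdiff : DifferentiableOn ℂ g (Metric.ball 0 1) := hdiff.const_mul _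
  have hgb : ∀ x : ℂ, ‖x‖ ≤ 1 → ‖g x‖ ≤ r := by
    intro x hx
    rw [hg]
    simp only [norm_mul, norm_inv, hy, inv_one, one_mul]
    exact hglob x hx
  obtain ⟨l, ⟨hl1, hl2⟩, hlu⟩ := holo_fixed_point hr0 hr1 hgdiff hgb
  have hiff : ∀ x : ℂ, ‖x‖ < 1 → (x * y = Ψ x y ↔ g x = x) := by
    intro x hx
    have hPsix : Ψ x y = S x := hΨ x y hx.le hy.le
    rw [hPsix]
    show x * y = S x ↔ y⁻¹ * S x = x
    rw [inv_mul_eq_iff_eq_mul₀ hy0]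
    constructor
    · intro h; rw [← h]; ring
    · intro h; rw [h]; ring
  refine ⟨l, ⟨hl1, (hiff l hl1).2 hl2⟩, fun z hz => hlu z ⟨hz.1, (hiff z hz.1).1 hz.2⟩⟩
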